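/- Non-decreasing bound under row extension: let P be an n_c × n_v matrix over ℕ and let P' be the (n_c+1) × (n_v+1) matrix obtained by appending a zero column to P and then appending a new row whose last entry is 1. Define d(M) for an m × n matrix M (n > m) as min* over S ⊆ [n], |S| = m+1, of ∑_{i∈S} perm(M_{S∖i}), where min* takes the minimum over nonzero values. If d(P) is finite and positive, then d(P') ≥ d(P). -/

import Mathlib

open Matrix BigOperators

def perm {ι : Type*} [Fintype ι] [DecidableEq ι] {R : Type*} [CommSemiring R]
    (A : Matrix ι ι R) : R :=
  ∑ σ : Equiv.Perm ι, ∏ j, A j (σ j)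

/-- `perm (M_{S∖i})`: the permanent of the `m × m` submatrix of `M` on the
columns `S ∖ {i}` taken in increasing order (junk value `0` if `S ∖ {i}` does
not have exactly `m` elements). -/
def permSub {m n : ℕ} (M : Matrix (Fin m) (Fin n) ℕ) (S : Finset (Fin n))
    (i : Fin n) : ℕ :=
  if h : (S.erase i).card = m then
    perm (M.submatrix id (fun a : Fin m => ((S.erase i).orderIsoOfFin h a : Fin n)))
  else 0

/-- `∑_{i ∈ S} perm (M_{S∖i})`. -/
def bsum {m n : ℕ} (M : Matrix (Fin m) (Fin n) ℕ) (S : Finset (Fin n)) : ℕ :=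
  ∑ i ∈ S, permSub M S i

/-- `d(M)`: the min* over all `S ⊆ [n]` with `|S| = m + 1` of
`∑_{i∈S} perm (M_{S∖i})`, taking the minimum only over the nonzero values
(`⊤` if all such sums are zero). -/
noncomputable def dbound {m n : ℕ} (M : Matrix (Fin m) (Fin n) ℕ) : ℕ∞ :=
  sInf {x : ℕ∞ | ∃ S : Finset (Fin n),
    S.card = m + 1 ∧ bsum M S ≠ 0 ∧ x = (bsum M S : ℕ∞)}

/-! ### Permanent lemmas -/

section PermLemmas
variable {ι ι' : Type*} [Fintype ι] [DecidableEq ι] [Fintype ι'] [DecidableEq ι']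
  {R : Type*} [CommSemiring R]

lemma perm_submatrix_equiv (e f : ι' ≃ ι) (A : Matrix ι ι R) :
    perm (A.submatrix e f) = perm A := by
  unfold perm
  refine Fintype.sum_bijective (fun σ : Equiv.Perm ι' => (e.symm.trans (σ.trans f)))
    ?_ _ _ fun σ => ?_
  · exact Equiv.bijective ⟨fun σ => e.symm.trans (σ.trans f),
      fun τ => e.trans (τ.trans f.symm), fun σ => by ext x; simp, fun τ => by ext x; simp⟩
  · conv_rhs => rw [← Equiv.prod_comp e]
    simp [Matrix.submatrix_apply]

lemma perm_transpose (A : Matrix ι ι R) : perm Aᵀ = perm A := by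
  unfold perm
  refine Fintype.sum_bijective (fun σ : Equiv.Perm ι => σ⁻¹)
    (Equiv.bijective (Equiv.inv _)) _ _ fun σ => ?_
  conv_rhs => rw [← Equiv.prod_comp σ (fun x => A x (σ⁻¹ x))]
  simp [Matrix.transpose_apply]

theorem perm_succ_row_zero {n : ℕ} (A : Matrix (Fin (n+1)) (Fin (n+1)) R) :
    perm A = ∑ j : Fin (n+1), A 0 j * perm (A.submatrix Fin.succ j.succAbove) := by
  rw [perm, Finset.univ_perm_fin_succ, ← Finset.univ_product_univ]
  simp only [Finset.sum_map, Equiv.toEmbedding_apply, Finset.sum_product]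
  refine Finset.sum_congr rfl fun p _ => Fin.cases ?_ (fun p => ?_) p
  · simp [perm, Fin.prod_univ_succ, Equiv.Perm.decomposeFin_symm_apply_zero,
      Equiv.Perm.decomposeFin_symm_apply_succ, Finset.mul_sum, Matrix.submatrix_apply]
  · rw [perm, Finset.mul_sum]
    refine Fintype.sum_bijective (fun σ : Equiv.Perm (Fin n) => p.cycleRange * σ)
      (Group.mulLeft_bijective _) _ _ fun σ => ?_
    rw [Fin.prod_univ_succ]
    simp only [Equiv.Perm.decomposeFin_symm_apply_zero,
      Equiv.Perm.decomposeFin_symm_apply_succ, Matrix.submatrix_apply]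
    congr 1
    refine Finset.prod_congr rfl fun j _ => ?_
    congr 1
    rw [Equiv.Perm.mul_apply, Fin.succAbove_cycleRange]

theorem perm_succ_row_last {n : ℕ} (A : Matrix (Fin (n+1)) (Fin (n+1)) R) :
    perm A = ∑ j : Fin (n+1), A (Fin.last n) j *
      perm (A.submatrix Fin.castSucc j.succAbove) := by
  have h := perm_succ_row_zero (A.submatrix (Fin.revPerm : Fin (n+1) ≃ Fin (n+1)) id)
  rw [show (A.submatrix (Fin.revPerm : Fin (n+1) ≃ Fin (n+1)) id) =
    A.submatrix (Fin.revPerm : Fin (n+1) ≃ Fin (n+1)) (Equiv.refl _) from rfl,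
    perm_submatrix_equiv] at h
  rw [h]
  refine Finset.sum_congr rfl fun j _ => ?_
  congr 1
  rw [← perm_submatrix_equiv (Fin.revPerm : Fin n ≃ Fin n) (Equiv.refl _)
    (A.submatrix Fin.castSucc j.succAbove)]
  congr 1
  ext r c
  simp [Matrix.submatrix_apply, Fin.rev_succ]

theorem perm_succ_col_last {n : ℕ} (A : Matrix (Fin (n+1)) (Fin (n+1)) R) :
    perm A = ∑ i : Fin (n+1), A i (Fin.last n) *
      perm (A.submatrix i.succAbove Fin.castSucc) := by
  rw [← perm_transpose A, perm_succ_row_last]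
  refine Finset.sum_congr rfl fun i _ => ?_
  rw [← perm_transpose (A.submatrix i.succAbove Fin.castSucc)]
  simp [Matrix.transpose_submatrix]

theorem perm_col_last_zeros {n : ℕ} (A : Matrix (Fin (n+1)) (Fin (n+1)) R)
    (h : ∀ r : Fin n, A r.castSucc (Fin.last n) = 0) :
    perm A = A (Fin.last n) (Fin.last n) *
      perm (A.submatrix Fin.castSucc Fin.castSucc) := by
  rw [perm_succ_col_last, Fin.sum_univ_castSucc]
  simp [h, Fin.succAbove_last]

end PermLemmas

/-! ### orderIsoOfFin lemmas -/

section OIO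
variable {α : Type*} [LinearOrder α] [DecidableEq α]

omit [DecidableEq α] in
lemma oio_congr {E₁ E₂ : Finset α} (hE : E₁ = E₂) {k : ℕ} (h₁ : E₁.card = k)
    (h₂ : E₂.card = k) (a : Fin k) :
    (E₁.orderIsoOfFin h₁ a : α) = E₂.orderIsoOfFin h₂ a := by subst hE; rfl

lemma oio_erase (T : Finset α) {k : ℕ} (h : T.card = k + 1) (c : Fin (k + 1))
    (h' : (T.erase (T.orderIsoOfFin h c : α)).card = k) (a : Fin k) :
    ((T.erase (T.orderIsoOfFin h c : α)).orderIsoOfFin h' a : α) =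
      T.orderIsoOfFin h (c.succAbove a) := by
  have key : ((Fin.succAboveOrderEmb c).trans (T.orderEmbOfFin h)) =
      (T.erase (T.orderIsoOfFin h c : α)).orderEmbOfFin h' := by
    refine Finset.orderEmbOfFin_unique' h' fun x => ?_
    rw [Finset.mem_erase]
    refine ⟨?_, by rw [RelEmbedding.trans_apply]; exact Finset.orderEmbOfFin_mem T h _⟩
    rw [RelEmbedding.trans_apply, Finset.coe_orderIsoOfFin_apply]
    intro hx
    exact Fin.succAbove_ne c x ((T.orderEmbOfFin h).injective hx)
  have hk := DFunLike.congr_fun key a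
  exact hk.symm

omit [DecidableEq α] in
lemma oio_last {N : ℕ} (U : Finset (Fin (N + 1))) {k : ℕ} (h : U.card = k + 1)
    (hl : Fin.last N ∈ U) :
    (U.orderIsoOfFin h (Fin.last k) : Fin (N + 1)) = Fin.last N := by
  refine le_antisymm (Fin.le_last _) ?_
  obtain ⟨b, hb⟩ : ∃ b, (U.orderIsoOfFin h b : Fin (N+1)) = Fin.last N :=
    ⟨(U.orderIsoOfFin h).symm ⟨_, hl⟩, by simp⟩
  rw [← hb]
  exact (U.orderIsoOfFin h).monotone (Fin.le_last b)

omit [DecidableEq α] in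
lemma oio_map {N : ℕ} (S : Finset (Fin N)) {k : ℕ} (h : S.card = k)
    (h' : (S.map Fin.castSuccOrderEmb.toEmbedding).card = k) (a : Fin k) :
    ((S.map Fin.castSuccOrderEmb.toEmbedding).orderIsoOfFin h' a : Fin (N + 1)) =
      Fin.castSucc (S.orderIsoOfFin h a) := by
  have key : ((S.orderEmbOfFin h).trans Fin.castSuccOrderEmb) =
      (S.map Fin.castSuccOrderEmb.toEmbedding).orderEmbOfFin h' := by
    refine Finset.orderEmbOfFin_unique' h' fun x => ?_
    simp only [RelEmbedding.trans_apply]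
    exact Finset.mem_map_of_mem _ (Finset.orderEmbOfFin_mem S h _)
  have hk := DFunLike.congr_fun key a
  exact hk.symm

omit [DecidableEq α] in
lemma sum_oio {M : Type*} [AddCommMonoid M] (T : Finset α) {k : ℕ} (h : T.card = k)
    (F : α → M) : ∑ c : Fin k, F (T.orderIsoOfFin h c : α) = ∑ j ∈ T, F j := by
  rw [← Finset.sum_coe_sort T F]
  exact Fintype.sum_equiv (T.orderIsoOfFin h).toEquiv _ _ fun c => rfl

end OIO

lemma exists_map_eq {N : ℕ} (U : Finset (Fin (N + 1))) (h : Fin.last N ∉ U) :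
    ∃ S : Finset (Fin N), S.map Fin.castSuccOrderEmb.toEmbedding = U := by
  classical
  refine ⟨U.preimage Fin.castSucc (Fin.castSucc_injective N).injOn, ?_⟩
  ext x
  simp only [Finset.mem_map, Finset.mem_preimage]
  constructor
  · rintro ⟨y, hy, rfl⟩; exact hy
  · intro hx
    have hxl : x ≠ Fin.last N := fun hxe => h (hxe ▸ hx)
    obtain ⟨y, rfl⟩ := Fin.exists_castSucc_eq.mpr hxl
    exact ⟨y, hx, rfl⟩

lemma permSub_def' {m n : ℕ} (M : Matrix (Fin m) (Fin n) ℕ) (S : Finset (Fin n))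
    (i : Fin n) {E : Finset (Fin n)} (hE : S.erase i = E) (hc : E.card = m) :
    permSub M S i =
      perm (M.submatrix id (fun a : Fin m => (E.orderIsoOfFin hc a : Fin n))) := by
  subst hE
  unfold permSub
  rw [dif_pos]

lemma permSub_congr {m n : ℕ} (M : Matrix (Fin m) (Fin n) ℕ) {S₁ S₂ : Finset (Fin n)}
    {i₁ i₂ : Fin n} (h : S₁.erase i₁ = S₂.erase i₂) :
    permSub M S₁ i₁ = permSub M S₂ i₂ := by
  by_cases hc : (S₂.erase i₂).card = m
  · rw [permSub_def' M S₁ i₁ h hc, permSub_def' M S₂ i₂ rfl hc]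
  · unfold permSub
    rw [dif_neg (by rw [h]; exact hc), dif_neg hc]

/-! ### The two core expansion lemmas for the extended matrix -/

section Core
variable {nc nv : ℕ} (P : Matrix (Fin nc) (Fin nv) ℕ) (v : Fin nv → ℕ)
  (P' : Matrix (Fin (nc + 1)) (Fin (nv + 1)) ℕ)

lemma core1
    (htop : ∀ (r : Fin nc) (c : Fin nv), P' r.castSucc c.castSucc = P r c)
    (hrow : ∀ c : Fin nv, P' (Fin.last nc) c.castSucc = v c)
    (T : Finset (Fin nv)) (hT : T.card = nc + 1)
    (W : Finset (Fin (nv + 1))) (i' : Fin (nv + 1))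
    (hW : W.erase i' = T.map Fin.castSuccOrderEmb.toEmbedding) :
    permSub P' W i' = ∑ j ∈ T, v j * permSub P T j := by
  have hc : (T.map Fin.castSuccOrderEmb.toEmbedding).card = nc + 1 := by
    rw [Finset.card_map, hT]
  rw [permSub_def' P' W i' hW hc, perm_succ_row_last,
    ← sum_oio T hT (fun j => v j * permSub P T j)]
  refine Finset.sum_congr rfl fun c _ => ?_
  have hmem : (T.orderIsoOfFin hT c : Fin nv) ∈ T := by
    rw [Finset.coe_orderIsoOfFin_apply]; exact Finset.orderEmbOfFin_mem T hT c
  have hce : (T.erase (T.orderIsoOfFin hT c : Fin nv)).card = nc := by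
    rw [Finset.card_erase_of_mem hmem, hT]; omega
  congr 1
  · show P' (Fin.last nc)
      ((T.map Fin.castSuccOrderEmb.toEmbedding).orderIsoOfFin hc c : Fin (nv+1)) = _
    rw [oio_map T hT hc c, hrow]
  · rw [permSub_def' P T _ rfl hce]
    congr 1
    ext r a
    show P' (Fin.castSucc r)
        ((T.map Fin.castSuccOrderEmb.toEmbedding).orderIsoOfFin hc (c.succAbove a) : Fin (nv+1))
      = P r ((T.erase (T.orderIsoOfFin hT c : Fin nv)).orderIsoOfFin hce a : Fin nv)
    rw [oio_map T hT hc, htop, oio_erase T hT c hce a]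

lemma core2
    (htop : ∀ (r : Fin nc) (c : Fin nv), P' r.castSucc c.castSucc = P r c)
    (hzero : ∀ r : Fin nc, P' r.castSucc (Fin.last nv) = 0)
    (hone : P' (Fin.last nc) (Fin.last nv) = 1)
    (T : Finset (Fin nv)) (hT : T.card = nc + 1) (j : Fin nv) (hj : j ∈ T)
    (W : Finset (Fin (nv + 1))) (i' : Fin (nv + 1))
    (hW : W.erase i' = insert (Fin.last nv)
      ((T.erase j).map Fin.castSuccOrderEmb.toEmbedding)) :
    permSub P' W i' = permSub P T j := by
  have hjef : (T.erase j).card = nc := by rw [Finset.card_erase_of_mem hj, hT]; omega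
  have hnl : Fin.last nv ∉ (T.erase j).map Fin.castSuccOrderEmb.toEmbedding := by
    rw [Finset.mem_map]
    rintro ⟨x, -, hx⟩
    exact absurd hx (Fin.castSucc_lt_last x).ne
  have hU : (insert (Fin.last nv)
      ((T.erase j).map Fin.castSuccOrderEmb.toEmbedding)).card = nc + 1 := by
    rw [Finset.card_insert_of_notMem hnl, Finset.card_map, hjef]
  set U := insert (Fin.last nv) ((T.erase j).map Fin.castSuccOrderEmb.toEmbedding) with hUdef
  have hUlast : (U.orderIsoOfFin hU (Fin.last nc) : Fin (nv + 1)) = Fin.last nv :=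
    oio_last U hU (Finset.mem_insert_self _ _)
  have herase : U.erase (U.orderIsoOfFin hU (Fin.last nc) : Fin (nv + 1)) =
      (T.erase j).map Fin.castSuccOrderEmb.toEmbedding := by
    rw [hUlast, hUdef, Finset.erase_insert hnl]
  have hce : (U.erase (U.orderIsoOfFin hU (Fin.last nc) : Fin (nv + 1))).card = nc := by
    rw [herase, Finset.card_map, hjef]
  rw [permSub_def' P' W i' hW hU, perm_col_last_zeros _ (fun r => by
    show P' (Fin.castSucc r) (U.orderIsoOfFin hU (Fin.last nc) : Fin (nv+1)) = 0
    rw [hUlast]; exact hzero r)]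
  have h11 : P'.submatrix id (fun a : Fin (nc+1) => (U.orderIsoOfFin hU a : Fin (nv+1)))
      (Fin.last nc) (Fin.last nc) = 1 := by
    show P' (Fin.last nc) (U.orderIsoOfFin hU (Fin.last nc) : Fin (nv+1)) = 1
    rw [hUlast]; exact hone
  rw [h11, one_mul, permSub_def' P T j rfl hjef]
  congr 1
  ext r a
  show P' (Fin.castSucc r) (U.orderIsoOfFin hU (Fin.castSucc a) : Fin (nv+1))
    = P r ((T.erase j).orderIsoOfFin hjef a : Fin nv)
  have hcol : (U.orderIsoOfFin hU (Fin.castSucc a) : Fin (nv + 1)) =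
      Fin.castSucc ((T.erase j).orderIsoOfFin hjef a : Fin nv) := by
    have h1 := oio_erase U hU (Fin.last nc) hce a
    rw [Fin.succAbove_last] at h1
    rw [← h1, oio_congr herase hce (by rw [Finset.card_map, hjef]) a,
      oio_map (T.erase j) hjef _ a]
  rw [hcol, htop]

end Core

/-- Non-decreasing bound under row extension: extending `P` by a zero column and
then a new row whose last entry is `1` (and arbitrary entries `v` elsewhere)
cannot decrease the minimum-distance upper bound `d`. -/
theorem dbound_mono_row_extension {nc nv : ℕ} (P : Matrix (Fin nc) (Fin nv) ℕ)
    (v : Fin nv → ℕ) (P' : Matrix (Fin (nc + 1)) (Fin (nv + 1)) ℕ)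
    (htop : ∀ (r : Fin nc) (c : Fin nv), P' r.castSucc c.castSucc = P r c)
    (hzero : ∀ r : Fin nc, P' r.castSucc (Fin.last nv) = 0)
    (hrow : ∀ c : Fin nv, P' (Fin.last nc) c.castSucc = v c)
    (hone : P' (Fin.last nc) (Fin.last nv) = 1)
    (hfin : dbound P ≠ ⊤) (hpos : dbound P ≠ 0) :
    dbound P ≤ dbound P' := by
  refine le_sInf fun x hx => ?_
  obtain ⟨S', hS'card, hS'ne, rfl⟩ := hx
  suffices hcl : ∃ T : Finset (Fin nv),
      T.card = nc + 1 ∧ bsum P T ≠ 0 ∧ bsum P T ≤ bsum P' S' by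
    obtain ⟨T, hTc, hTne, hTle⟩ := hcl
    exact le_trans (sInf_le ⟨T, hTc, hTne, rfl⟩) (by exact_mod_cast hTle)
  by_cases hl : Fin.last nv ∈ S'
  · -- the new column is used
    obtain ⟨T, hTm⟩ := exists_map_eq (S'.erase (Fin.last nv)) (Finset.notMem_erase _ _)
    have hTc : T.card = nc + 1 := by
      have hcm := congrArg Finset.card hTm
      rw [Finset.card_map] at hcm
      rw [hcm, Finset.card_erase_of_mem hl, hS'card]; omega
    have hS'eq : S' = insert (Fin.last nv) (T.map Fin.castSuccOrderEmb.toEmbedding) := by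
      rw [hTm]; exact (Finset.insert_erase hl).symm
    have hb : bsum P' S' = (∑ j ∈ T, v j * permSub P T j) + bsum P T := by
      rw [bsum, ← Finset.add_sum_erase _ _ hl]
      congr 1
      · exact core1 P v P' htop hrow T hTc S' (Fin.last nv) hTm.symm
      · rw [← hTm, Finset.sum_map, bsum]
        refine Finset.sum_congr rfl fun j hj => ?_
        refine core2 P P' htop hzero hone T hTc j hj S' j.castSucc ?_
        rw [hS'eq, Finset.erase_insert_of_ne (Fin.castSucc_lt_last j).ne',
          Finset.map_erase]
        rfl
    by_cases hz : bsum P T = 0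
    · exfalso
      apply hS'ne
      rw [hb, hz, add_zero]
      refine Finset.sum_eq_zero fun j hj => ?_
      have : permSub P T j = 0 := by
        rw [bsum] at hz
        exact (Finset.sum_eq_zero_iff.mp hz) j hj
      rw [this, mul_zero]
    · exact ⟨T, hTc, hz, by rw [hb]; exact Nat.le_add_left _ _⟩
  · -- the new column is unused
    obtain ⟨S, hSm⟩ := exists_map_eq S' hl
    have hSc : S.card = nc + 1 + 1 := by
      have hcm := congrArg Finset.card hSm
      rw [Finset.card_map] at hcm
      rw [hcm, hS'card]
    have hb : bsum P' S' = ∑ j ∈ S, v j * bsum P (S.erase j) := by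
      rw [bsum, ← hSm, Finset.sum_map]
      have step : ∀ i ∈ S, permSub P' (S.map Fin.castSuccOrderEmb.toEmbedding)
          (Fin.castSuccOrderEmb.toEmbedding i) =
          ∑ j ∈ S.erase i, v j * permSub P (S.erase i) j := fun i hi =>
        core1 P v P' htop hrow (S.erase i)
          (by rw [Finset.card_erase_of_mem hi, hSc]; omega)
          (S.map Fin.castSuccOrderEmb.toEmbedding) _ (Finset.map_erase _ _ _).symm
      rw [Finset.sum_congr rfl step,
        Finset.sum_comm' (s' := fun j => S.erase j) (t' := S)
          (fun i j => by
            simp only [Finset.mem_erase]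
            constructor
            · rintro ⟨hi, hne, hj⟩; exact ⟨⟨Ne.symm hne, hi⟩, hj⟩
            · rintro ⟨⟨hne, hi⟩, hj⟩; exact ⟨hi, Ne.symm hne, hj⟩)]
      refine Finset.sum_congr rfl fun j hj => ?_
      rw [bsum, Finset.mul_sum]
      refine Finset.sum_congr rfl fun i hi => ?_
      congr 1
      refine permSub_congr P ?_
      ext z
      simp only [Finset.mem_erase]
      tauto
    rw [hb] at hS'ne
    obtain ⟨j, hj, hjne⟩ : ∃ j ∈ S, v j * bsum P (S.erase j) ≠ 0 := by
      by_contra hcon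
      push_neg at hcon
      exact hS'ne (Finset.sum_eq_zero fun j hj => hcon j hj)
    refine ⟨S.erase j, by rw [Finset.card_erase_of_mem hj, hSc]; omega, ?_, ?_⟩
    · exact fun hz => hjne (by rw [hz, mul_zero])
    · calc bsum P (S.erase j) ≤ v j * bsum P (S.erase j) :=
            Nat.le_mul_of_pos_left _ (Nat.pos_of_ne_zero fun hv => hjne (by rw [hv, zero_mul]))
        _ ≤ ∑ j ∈ S, v j * bsum P (S.erase j) :=
            Finset.single_le_sum (f := fun j => v j * bsum P (S.erase j))
              (fun _ _ => Nat.zero_le _) hj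
        _ = bsum P' S' := hb.symm
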